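/- arXiv:1703.04069 — 4 statements merged into one kernel-verified Lean document; each statement's English description precedes it below -/
import Mathlib

section
/- Let (X, d) be a compact metric space, f : X → X a continuous map, and m a Borel probability measure on X. Then the set of SRB-like measures for f (with respect to the reference measure m) is nonempty. -/
open MeasureTheory Filter Set
open scoped ENNReal NNReal

variable {X : Type*} [MetricSpace X] [CompactSpace X] [MeasurableSpace X] [BorelSpace X]

open TopologicalSpace BoundedContinuousFunction
open scoped Topology

theorem exists_tendsto_subseq [Nonempty X] (μs : ℕ → ProbabilityMeasure X) :
    ∃ (ν : ProbabilityMeasure X) (φ : ℕ → ℕ), StrictMono φ ∧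
      Tendsto (μs ∘ φ) atTop (𝓝 ν) := by
  obtain ⟨ν, -, φ, hφ, htend⟩ := isCompact_univ.tendsto_subseq (fun n ↦ mem_univ (μs n))
  exact ⟨ν, φ, hφ, htend⟩

instance probMeasCompact [Nonempty X] : CompactSpace (ProbabilityMeasure X) := by
  set e := LevyProkhorov.probabilityMeasureHomeomorph (Ω := X) with he
  have hseq : IsSeqCompact (univ : Set (LevyProkhorov (ProbabilityMeasure X))) := by
    intro v _
    obtain ⟨ν, φ, hφ, htend⟩ := exists_tendsto_subseq (fun n ↦ e.symm (v n))
    refine ⟨e ν, mem_univ _, φ, hφ, ?_⟩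
    have h2 := (e.continuous.tendsto ν).comp htend
    simpa [Function.comp_def, e.apply_symm_apply] using h2
  haveI : CompactSpace (LevyProkhorov (ProbabilityMeasure X)) :=
    ⟨hseq.isCompact⟩
  exact e.symm.compactSpace


/-- The `n`-th empirical measure (with `n+1` points) of `x` under iteration of `f`:
`σ_{n+1}(x) = (1/(n+1)) ∑_{i=0}^{n} δ_{f^i(x)}`. -/
noncomputable def empiricalMeasure (f : X → X) (x : X) (n : ℕ) : Measure X :=
  ((n + 1 : ℝ≥0∞))⁻¹ • ∑ i ∈ Finset.range (n + 1), Measure.dirac (f^[i] x)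

theorem empiricalMeasure_isProbabilityMeasure (f : X → X) (x : X) (n : ℕ) :
    IsProbabilityMeasure (empiricalMeasure f x n) := by
  constructor
  simp [empiricalMeasure, Measure.smul_apply, Measure.finset_sum_apply,
    Measure.dirac_apply_of_mem (Set.mem_univ _)]
  exact ENNReal.inv_mul_cancel (by simp) (by simp)

/-- The `n`-th empirical measure as a Borel probability measure. -/
noncomputable def empirical (f : X → X) (x : X) (n : ℕ) : ProbabilityMeasure X :=
  ⟨empiricalMeasure f x n, empiricalMeasure_isProbabilityMeasure f x n⟩

/-- `pω(x)`: the set of weak-* limit points of the sequence of empirical measures of `x`,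
in the space of Borel probability measures with the weak-* topology. -/
def pOmega (f : X → X) (x : X) : Set (ProbabilityMeasure X) :=
  {ν | MapClusterPt ν atTop (empirical f x)}

/-- `μ` is SRB-like (observable) for `f` w.r.t. the reference measure `m`: for every `ε > 0`,
the set `A_ε(μ)` of points `x` having some weak-* limit point of its empirical measures at
Lévy–Prokhorov distance `< ε` from `μ` has positive `m`-measure. -/
def IsSRBLike (f : X → X) (m : Measure X) (μ : ProbabilityMeasure X) : Prop :=
  ∀ ε : ℝ, 0 < ε →
    0 < m {x | ∃ ν ∈ pOmega f x,
      levyProkhorovDist (ν : Measure X) (μ : Measure X) < ε}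

/-- The set of SRB-like measures is nonempty. -/
theorem exists_SRBLike (f : X → X) (hf : Continuous f)
    (m : Measure X) [IsProbabilityMeasure m] :
    ∃ μ : ProbabilityMeasure X, IsSRBLike f m μ := by
  haveI : Nonempty X := by
    by_contra hne
    rw [not_nonempty_iff] at hne
    have h1 : m univ = 1 := measure_univ
    rw [Set.univ_eq_empty_iff.mpr hne, measure_empty] at h1
    exact zero_ne_one h1
  by_contra hno
  push_neg at hno
  have hno' : ∀ μ : ProbabilityMeasure X, ∃ ε : ℝ, 0 < ε ∧
      m {x | ∃ ν ∈ pOmega f x,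
        levyProkhorovDist (ν : Measure X) (μ : Measure X) < ε} = 0 := by
    intro μ
    have h := hno μ
    rw [IsSRBLike] at h
    push_neg at h
    obtain ⟨ε, hε, hle⟩ := h
    exact ⟨ε, hε, le_antisymm hle zero_le⟩
  choose ε hεpos hεnull using hno'
  set e := LevyProkhorov.probabilityMeasureHomeomorph (Ω := X) with he
  haveI : CompactSpace (LevyProkhorov (ProbabilityMeasure X)) := e.compactSpace
  have hcov : (univ : Set (LevyProkhorov (ProbabilityMeasure X))) ⊆
      ⋃ μ : ProbabilityMeasure X, Metric.ball (e μ) (ε μ) := by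
    intro ℓ _
    refine mem_iUnion.mpr ⟨e.symm ℓ, ?_⟩
    rw [Metric.mem_ball]
    rw [e.apply_symm_apply]
    simpa using hεpos (e.symm ℓ)
  obtain ⟨t, ht⟩ := isCompact_univ.elim_finite_subcover
    (fun μ : ProbabilityMeasure X ↦ Metric.ball (e μ) (ε μ))
    (fun μ ↦ Metric.isOpen_ball) hcov
  have hx : (univ : Set X) ⊆ ⋃ μ ∈ t, {x | ∃ ν ∈ pOmega f x,
      levyProkhorovDist (ν : Measure X) (μ : Measure X) < ε μ} := by
    intro x _
    obtain ⟨ν, -, hν⟩ := isCompact_univ.exists_clusterPt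
      (f := Filter.map (empirical f x) atTop) (le_principal_iff.mpr univ_mem)
    have hνp : ν ∈ pOmega f x := hν
    have hmem := ht (mem_univ (e ν))
    rw [mem_iUnion₂] at hmem
    obtain ⟨μ, hμt, hball⟩ := hmem
    refine mem_iUnion₂.mpr ⟨μ, hμt, ⟨ν, hνp, ?_⟩⟩
    rw [Metric.mem_ball] at hball
    exact hball
  have hle : m univ ≤ ∑ μ ∈ t, m {x | ∃ ν ∈ pOmega f x,
      levyProkhorovDist (ν : Measure X) (μ : Measure X) < ε μ} :=
    (measure_mono hx).trans (measure_biUnion_finset_le t _)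
  rw [measure_univ] at hle
  simp only [hεnull, Finset.sum_const_zero] at hle
  exact (by norm_num : ¬ ((1:ℝ≥0∞) ≤ 0)) hle
end

section
/- Let (X, d) be a compact metric space, f : X → X a continuous map, and m a Borel probability measure on X. Then every SRB-like measure for f (with respect to m) is f-invariant, i.e. μ(f⁻¹(B)) = μ(B) for every Borel set B ⊆ X. -/
open MeasureTheory Filter Set
open scoped ENNReal NNReal Topology

variable {X : Type*} [MetricSpace X] [CompactSpace X] [MeasurableSpace X] [BorelSpace X]

open BoundedContinuousFunction in
lemma integral_empiricalMeasure (f : X → X) (x : X) (n : ℕ) (g : X →ᵇ ℝ) :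
    ∫ y, g y ∂(empiricalMeasure f x n)
      = ((n : ℝ) + 1)⁻¹ * ∑ i ∈ Finset.range (n + 1), g (f^[i] x) := by
  rw [empiricalMeasure, integral_smul_measure,
    integral_finset_sum_measure (fun i _ => g.integrable _)]
  simp [integral_dirac, ENNReal.toReal_inv, smul_eq_mul]
  exact Or.inl (by
    rw [ENNReal.toReal_add (by simp) ENNReal.one_ne_top, ENNReal.toReal_natCast, ENNReal.toReal_one])

open BoundedContinuousFunction in
lemma integral_comp_empiricalMeasure (f : X → X) (hf : Continuous f) (x : X) (n : ℕ)
    (g : X →ᵇ ℝ) :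
    ∫ y, g (f y) ∂(empiricalMeasure f x n) - ∫ y, g y ∂(empiricalMeasure f x n)
      = ((n : ℝ) + 1)⁻¹ * (g (f^[n+1] x) - g x) := by
  have h1 := integral_empiricalMeasure f x n (g.compContinuous ⟨f, hf⟩)
  have h2 := integral_empiricalMeasure f x n g
  simp only [compContinuous_apply, ContinuousMap.coe_mk] at h1
  rw [h1, h2, ← mul_sub]
  congr 1
  have hiter : ∀ i, g (f (f^[i] x)) = g (f^[i+1] x) := fun i => by
    rw [Function.iterate_succ_apply']
  simp_rw [hiter]
  have e1 := Finset.sum_range_succ' (fun i => g (f^[i] x)) (n + 1)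
  have e2 := Finset.sum_range_succ (fun i => g (f^[i] x)) (n + 1)
  simp only [Function.iterate_zero_apply] at e1
  linarith [e1, e2]

open BoundedContinuousFunction in
lemma pOmega_integral_eq (f : X → X) (hf : Continuous f) {x : X} {ν : ProbabilityMeasure X}
    (hν : ν ∈ pOmega f x) (g : X →ᵇ ℝ) :
    ∫ y, g (f y) ∂(ν : Measure X) = ∫ y, g y ∂(ν : Measure X) := by
  obtain ⟨ψ, hψ, htend⟩ := TopologicalSpace.FirstCountableTopology.tendsto_subseq hν
  set gf : X →ᵇ ℝ := g.compContinuous ⟨f, hf⟩ with hgf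
  have h1 : Tendsto (fun k => ∫ y, g y ∂(empiricalMeasure f x (ψ k))) atTop
      (𝓝 (∫ y, g y ∂(ν : Measure X))) :=
    ProbabilityMeasure.tendsto_iff_forall_integral_tendsto.mp htend g
  have h2 : Tendsto (fun k => ∫ y, gf y ∂(empiricalMeasure f x (ψ k))) atTop
      (𝓝 (∫ y, gf y ∂(ν : Measure X))) :=
    ProbabilityMeasure.tendsto_iff_forall_integral_tendsto.mp htend gf
  have hdiff : Tendsto (fun k => ∫ y, gf y ∂(empiricalMeasure f x (ψ k))
      - ∫ y, g y ∂(empiricalMeasure f x (ψ k))) atTop (𝓝 0) := by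
    apply squeeze_zero_norm (a := fun k => (1 / ((ψ k : ℝ) + 1)) * (2 * ‖g‖))
    · intro k
      have := integral_comp_empiricalMeasure f hf x (ψ k) g
      simp only [compContinuous_apply, ContinuousMap.coe_mk, hgf] at this ⊢
      rw [this, norm_mul]
      have hb : ‖g (f^[ψ k + 1] x) - g x‖ ≤ 2 * ‖g‖ := by
        calc ‖g (f^[ψ k + 1] x) - g x‖ ≤ ‖g (f^[ψ k + 1] x)‖ + ‖g x‖ := norm_sub_le _ _
        _ ≤ ‖g‖ + ‖g‖ := add_le_add (g.norm_coe_le_norm _) (g.norm_coe_le_norm _)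
        _ = 2 * ‖g‖ := by ring
      have hpos : (0:ℝ) ≤ (((ψ k : ℝ) + 1))⁻¹ := by positivity
      rw [Real.norm_eq_abs, abs_of_nonneg hpos, one_div]
      exact mul_le_mul_of_nonneg_left hb hpos
    · have := (tendsto_one_div_add_atTop_nhds_zero_nat (𝕜 := ℝ)).comp hψ.tendsto_atTop
      simpa using this.mul_const (2 * ‖g‖)
  have h2' : Tendsto (fun k => ∫ y, gf y ∂(empiricalMeasure f x (ψ k))) atTop
      (𝓝 (0 + ∫ y, g y ∂(ν : Measure X))) := by
    have := hdiff.add h1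
    simpa using this
  have : ∫ y, gf y ∂(ν : Measure X) = ∫ y, g y ∂(ν : Measure X) := by
    have := tendsto_nhds_unique h2 h2'
    simpa using this
  simpa [hgf] using this

open BoundedContinuousFunction in
lemma map_eq_of_forall_integral_eq (f : X → X) (hf : Continuous f) (ν : ProbabilityMeasure X)
    (h : ∀ g : X →ᵇ ℝ, ∫ y, g (f y) ∂(ν : Measure X) = ∫ y, g y ∂(ν : Measure X)) :
    Measure.map f (ν : Measure X) = (ν : Measure X) := by
  have : IsProbabilityMeasure (Measure.map f (ν : Measure X)) :=
    Measure.isProbabilityMeasure_map hf.measurable.aemeasurable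
  apply ext_of_forall_lintegral_eq_of_IsFiniteMeasure
  intro h0
  rw [lintegral_map (by exact measurable_coe_nnreal_ennreal.comp h0.continuous.measurable)
    hf.measurable]
  set h1 : X →ᵇ ℝ≥0 := h0.compContinuous ⟨f, hf⟩ with hh1
  have e1 : ∫⁻ y, (h0 (f y) : ℝ≥0∞) ∂(ν : Measure X) = ∫⁻ y, (h1 y : ℝ≥0∞) ∂(ν : Measure X) := rfl
  rw [e1, ← ENNReal.toReal_eq_toReal_iff' (h1.lintegral_lt_top_of_nnreal _).ne
    (h0.lintegral_lt_top_of_nnreal _).ne,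
    toReal_lintegral_coe_eq_integral, toReal_lintegral_coe_eq_integral]
  have := h (h0.comp _ isometry_subtype_coe.lipschitz)
  exact this

/-- Every SRB-like measure is `f`-invariant. -/
theorem SRBLike_invariant (f : X → X) (hf : Continuous f)
    (m : Measure X) [IsProbabilityMeasure m]
    (μ : ProbabilityMeasure X) (hμ : IsSRBLike f m μ) :
    ∀ B : Set X, MeasurableSet B → (μ : Measure X) (f ⁻¹' B) = (μ : Measure X) B := by
  intro B hB
  have hchoice : ∀ k : ℕ, ∃ ν : ProbabilityMeasure X,
      Measure.map f (ν : Measure X) = (ν : Measure X) ∧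
      levyProkhorovDist (ν : Measure X) (μ : Measure X) < 1 / ((k : ℝ) + 1) := by
    intro k
    have hpos := hμ (1 / ((k : ℝ) + 1)) (by positivity)
    obtain ⟨x, hx⟩ := nonempty_of_measure_ne_zero hpos.ne'
    obtain ⟨ν, hν, hd⟩ := hx
    exact ⟨ν, map_eq_of_forall_integral_eq f hf ν (fun g => pOmega_integral_eq f hf hν g), hd⟩
  choose ν hinv hdist using hchoice
  have htend : Tendsto ν atTop (𝓝 μ) := by
    have hLP : Tendsto (fun k => LevyProkhorov.toMeasureEquiv.symm (ν k)) atTop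
        (𝓝 (LevyProkhorov.toMeasureEquiv.symm μ)) := by
      rw [tendsto_iff_dist_tendsto_zero]
      apply squeeze_zero (fun k => dist_nonneg) (fun k => (hdist k).le)
      exact tendsto_one_div_add_atTop_nhds_zero_nat
    exact ((LevyProkhorov.probabilityMeasureHomeomorph
      (Ω := X)).symm.continuous.tendsto _).comp hLP
  have hkey : ∀ g : BoundedContinuousFunction X ℝ, ∫ y, g (f y) ∂(μ : Measure X) = ∫ y, g y ∂(μ : Measure X) := by
    intro g
    set gf : BoundedContinuousFunction X ℝ := g.compContinuous ⟨f, hf⟩ with hgf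
    have h1 := ProbabilityMeasure.tendsto_iff_forall_integral_tendsto.mp htend gf
    have h2 := ProbabilityMeasure.tendsto_iff_forall_integral_tendsto.mp htend g
    have heq : ∀ k, ∫ y, gf y ∂(ν k : Measure X) = ∫ y, g y ∂(ν k : Measure X) := by
      intro k
      conv_rhs => rw [← hinv k]
      rw [MeasureTheory.integral_map hf.measurable.aemeasurable
        g.continuous.aestronglyMeasurable]
      rfl
    simp_rw [heq] at h1
    have := tendsto_nhds_unique h1 h2
    simpa [hgf] using this
  have hmap : Measure.map f (μ : Measure X) = (μ : Measure X) :=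
    map_eq_of_forall_integral_eq f hf μ hkey
  rw [← Measure.map_apply hf.measurable hB, hmap]
end

section
/- Let (X, d) be a compact metric space, f : X → X a continuous map, and m a Borel probability measure on X. Let O be the set of SRB-like measures for f (with respect to m). If K ⊆ P(X) is any nonempty weak-*-compact set of Borel probability measures such that pω(x) ⊆ K for m-almost every x ∈ X, then O ⊆ K; that is, O is the minimal nonempty weak-*-compact set of probability measures containing the weak-* limit points of the empirical measures of m-almost every point. -/
open MeasureTheory Filter Set
open scoped ENNReal NNReal

variable {X : Type*} [MetricSpace X] [CompactSpace X] [MeasurableSpace X] [BorelSpace X]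

/-- Minimality: the set `O` of SRB-like measures is contained in any nonempty
weak-*-compact set `K` of probability measures such that `pω(x) ⊆ K` for `m`-a.e. `x`. -/
theorem SRBLike_minimal (f : X → X) (hf : Continuous f)
    (m : Measure X) [IsProbabilityMeasure m]
    (K : Set (ProbabilityMeasure X)) (hKne : K.Nonempty) (hKc : IsCompact K)
    (hK : ∀ᵐ x ∂m, pOmega f x ⊆ K) :
    {μ : ProbabilityMeasure X | IsSRBLike f m μ} ⊆ K := by
  intro μ hμ
  -- For each n, find νₙ ∈ K with LP-distance to μ less than 1/(n+1).
  have hchoice : ∀ n : ℕ, ∃ ν ∈ K,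
      levyProkhorovDist (ν : Measure X) (μ : Measure X) < 1 / (n + 1 : ℝ) := by
    intro n
    have hpos : (0 : ℝ) < 1 / (n + 1 : ℝ) := by positivity
    have hA := hμ _ hpos
    -- the set of bad points has measure 0
    set B := {x : X | ¬ pOmega f x ⊆ K} with hB
    have hBmeas : m B = 0 := hK
    have hAB : m ({x | ∃ ν ∈ pOmega f x,
        levyProkhorovDist (ν : Measure X) (μ : Measure X) < 1 / (n + 1 : ℝ)} \ B) ≠ 0 := by
      intro h0
      have := measure_diff_null hBmeas (s := {x | ∃ ν ∈ pOmega f x,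
        levyProkhorovDist (ν : Measure X) (μ : Measure X) < 1 / (n + 1 : ℝ)})
      rw [h0] at this
      exact absurd this.symm (ne_of_gt hA)
    obtain ⟨x, hx, hxB⟩ := nonempty_of_measure_ne_zero hAB
    obtain ⟨ν, hν, hνd⟩ := hx
    exact ⟨ν, (not_not.mp hxB) hν, hνd⟩
  choose ν hνK hνd using hchoice
  -- νₙ → μ in LP metric, hence in the weak topology.
  have hLP : Tendsto (fun n => LevyProkhorov.ofMeasure (ν n))
      atTop (nhds (LevyProkhorov.ofMeasure μ)) := by
    rw [tendsto_iff_dist_tendsto_zero]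
    apply squeeze_zero (fun n => dist_nonneg) (fun n => (hνd n).le)
    exact tendsto_one_div_add_atTop_nhds_zero_nat
  have htend : Tendsto ν atTop (nhds μ) :=
    (LevyProkhorov.continuous_toMeasure_probabilityMeasure.tendsto _).comp hLP
  exact hKc.isClosed.mem_of_tendsto htend (Eventually.of_forall hνK)
end

section
/- (Peano existence theorem.) Let n ≥ 1, let F : ℝ × ℝⁿ → ℝⁿ be continuous, and let (t₀, x₀) ∈ ℝ × ℝⁿ. Then there exist ε > 0 and a continuously differentiable function x : (t₀ - ε, t₀ + ε) → ℝⁿ such that x(t₀) = x₀ and x'(t) = F(t, x(t)) for all t ∈ (t₀ - ε, t₀ + ε). In particular, existence of a local solution of the initial value problem does not require F to be Lipschitz in the space variable. -/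
open Set

open Metric BoundedContinuousFunction


lemma lipschitz_approx {X : Type*} [MetricSpace X] {K : Set X} (hK : IsCompact K)
    (hne : K.Nonempty) {f : X → ℝ} (hf : ContinuousOn f K) {δ : ℝ} (hδ : 0 < δ) :
    ∃ (L : NNReal) (g : X → ℝ), LipschitzWith L g ∧ ∀ x ∈ K, |g x - f x| ≤ δ := by
  haveI : Nonempty K := hne.to_subtype
  obtain ⟨xm, hxmK, hm'⟩ := hK.exists_isMinOn hne hf
  obtain ⟨xM, hxMK, hM'⟩ := hK.exists_isMaxOn hne hf
  have hm : ∀ y ∈ K, f xm ≤ f y := fun y hy => hm' hy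
  have hM : ∀ y ∈ K, f y ≤ f xM := fun y hy => hM' hy
  have huc := (hK.uniformContinuousOn_of_continuous hf)
  rw [Metric.uniformContinuousOn_iff] at huc
  obtain ⟨η, hη, hmod⟩ := huc δ hδ
  set L : NNReal := ⟨max 1 ((f xM - f xm)/η), le_trans zero_le_one (le_max_left _ _)⟩ with hL
  have hLη : f xM - f xm ≤ (L : ℝ) * η := by
    have : (f xM - f xm)/η ≤ (L : ℝ) := le_max_right _ _
    calc f xM - f xm = ((f xM - f xm)/η) * η := by field_simp
    _ ≤ (L : ℝ) * η := by gcongr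
  set g : X → ℝ := fun y => ⨅ x : K, (f x + (L : ℝ) * dist y x) with hg
  have B : ∀ y : X, BddBelow (Set.range fun x : K => f x + (L:ℝ) * dist y x) := by
    intro y
    refine ⟨f xm, ?_⟩
    rintro _ ⟨z, rfl⟩
    dsimp only
    have h1 := hm z z.2
    have h2 : (0:ℝ) ≤ (L:ℝ) * dist y z := mul_nonneg L.2 dist_nonneg
    linarith
  have hlip : LipschitzWith L g := by
    refine LipschitzWith.of_le_add_mul L fun x y => ?_
    rw [← sub_le_iff_le_add]
    refine le_ciInf fun z => ?_
    rw [sub_le_iff_le_add]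
    calc g x ≤ f z + (L:ℝ) * dist x z := ciInf_le (B x) z
    _ ≤ f z + (L:ℝ) * dist y z + (L:ℝ) * dist x y := by
        rw [add_assoc, ← mul_add, add_comm (dist y z)]
        gcongr
        exact dist_triangle x y z
  refine ⟨L, g, hlip, fun y hy => ?_⟩
  have hub : g y ≤ f y := by
    simpa using ciInf_le (B y) (⟨y, hy⟩ : K)
  have hlb : f y - δ ≤ g y := by
    refine le_ciInf fun z => ?_
    rcases lt_or_ge (dist y (z : X)) η with h | h
    · have := hmod y hy z z.2 h
      rw [Real.dist_eq] at this
      have h2 : (0:ℝ) ≤ (L:ℝ) * dist y z := mul_nonneg L.2 dist_nonneg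
      have := abs_lt.1 this
      linarith [this.1, this.2]
    · have h2 : (L:ℝ) * η ≤ (L:ℝ) * dist y (z:X) := by gcongr
      have h3 := hm z z.2
      have h4 := hM y hy
      linarith
  rw [abs_sub_le_iff]
  constructor <;> linarith


lemma euclid_coord_le_norm {n : ℕ} (x : EuclideanSpace ℝ (Fin n)) (i : Fin n) : |x i| ≤ ‖x‖ := by
  rw [EuclideanSpace.norm_eq, ← Real.sqrt_sq_eq_abs]
  apply Real.sqrt_le_sqrt
  refine Finset.single_le_sum (f := fun j => ‖x j‖ ^ 2) (fun j _ => by positivity) (Finset.mem_univ i) |>.trans_eq' ?_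
  rw [Real.norm_eq_abs, sq_abs]

lemma euclid_norm_le_of_coords {n : ℕ} {b : ℝ} (hb : 0 ≤ b) (x : EuclideanSpace ℝ (Fin n))
    (h : ∀ i, |x i| ≤ b) : ‖x‖ ≤ Real.sqrt n * b := by
  rw [EuclideanSpace.norm_eq]
  have h1 : ∑ i, ‖x i‖ ^ 2 ≤ (n : ℝ) * b ^ 2 := by
    calc ∑ i, ‖x i‖ ^ 2 ≤ ∑ _i : Fin n, b ^ 2 := by
          refine Finset.sum_le_sum fun i _ => ?_
          rw [Real.norm_eq_abs]
          exact pow_le_pow_left₀ (abs_nonneg _) (h i) 2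
    _ = (n : ℝ) * b ^ 2 := by simp [Finset.sum_const, mul_comm]
  calc Real.sqrt (∑ i, ‖x i‖ ^ 2) ≤ Real.sqrt ((n : ℝ) * b ^ 2) := Real.sqrt_le_sqrt h1
  _ = Real.sqrt n * b := by
      rw [Real.sqrt_mul (Nat.cast_nonneg n), Real.sqrt_sq hb]

lemma lip_clamp_max (c : ℝ) : LipschitzWith 1 (fun a : ℝ => max a c) := by
  refine LipschitzWith.of_dist_le_mul fun a b => ?_
  rw [Real.dist_eq, Real.dist_eq, NNReal.coe_one, one_mul]
  exact abs_max_sub_max_le_abs a b c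

lemma lip_clamp_min (c : ℝ) : LipschitzWith 1 (fun a : ℝ => min a c) := by
  refine LipschitzWith.of_dist_le_mul fun a b => ?_
  rw [Real.dist_eq, Real.dist_eq, NNReal.coe_one, one_mul]
  have := abs_min_sub_min_le_max a c b c
  simpa using this

lemma vec_lipschitz_approx {X : Type*} [MetricSpace X] {K : Set X} (hK : IsCompact K)
    (hne : K.Nonempty) {n : ℕ} {F : X → EuclideanSpace ℝ (Fin n)} (hF : Continuous F)
    {C : ℝ} (hC : ∀ p ∈ K, ‖F p‖ ≤ C) {δ : ℝ} (hδ : 0 < δ) (hδ1 : δ ≤ 1) :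
    ∃ (L : NNReal) (G : X → EuclideanSpace ℝ (Fin n)), LipschitzWith L G ∧
      (∀ p, ‖G p‖ ≤ Real.sqrt n * (C + 2)) ∧ ∀ p ∈ K, ‖G p - F p‖ ≤ Real.sqrt n * δ := by
  have hC0 : 0 ≤ C := le_trans (norm_nonneg _) (hC hne.choose hne.choose_spec)
  -- coordinatewise approximation
  have hcoord : ∀ i : Fin n, ∃ (L : NNReal) (g : X → ℝ), LipschitzWith L g ∧
      ∀ x ∈ K, |g x - F x i| ≤ δ := by
    intro i
    have hcont : ContinuousOn (fun p => F p i) K :=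
      ((continuous_apply i).comp ((EuclideanSpace.equiv (Fin n) ℝ).continuous.comp hF)).continuousOn
    exact lipschitz_approx hK hne hcont hδ
  choose L g hglip hgapprox using hcoord
  -- clamp
  set gc : Fin n → X → ℝ := fun i p => max (min (g i p) (C + 2)) (-(C + 2)) with hgc
  have hgclip : ∀ i, LipschitzWith (L i) (gc i) := by
    intro i
    have h1 := (lip_clamp_max (-(C+2))).comp ((lip_clamp_min (C+2)).comp (hglip i))
    have : gc i = (fun a => a ⊔ -(C + 2)) ∘ (fun a => a ⊓ (C + 2)) ∘ g i := rfl
    rw [this]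
    convert h1 using 2
    norm_num
  have hgc_bdd : ∀ i p, |gc i p| ≤ C + 2 := by
    intro i p
    rw [abs_le]
    constructor
    · exact le_max_right _ _
    · exact max_le (min_le_right _ _) (by linarith)
  have hgc_eq : ∀ i, ∀ p ∈ K, gc i p = g i p := by
    intro i p hp
    have h1 : |F p i| ≤ C := (euclid_coord_le_norm _ i).trans (hC p hp)
    have h2 := hgapprox i p hp
    have h3 : |g i p| ≤ C + 1 := by
      have := abs_sub_abs_le_abs_sub (g i p) (F p i)
      rw [abs_le] at h1 h2 ⊢
      constructor <;> linarith [h2.1, h2.2, h1.1, h1.2]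
    rw [abs_le] at h3
    show g i p ⊓ (C + 2) ⊔ -(C + 2) = g i p
    rw [min_eq_left (by linarith), max_eq_left (by linarith)]
  -- assemble
  set e := EuclideanSpace.equiv (Fin n) ℝ with he
  set G : X → EuclideanSpace ℝ (Fin n) := fun p => e.symm (fun i => gc i p) with hG
  have hGcoord : ∀ p i, G p i = gc i p := fun p i => rfl
  set Lm : NNReal := Finset.univ.sup L with hLm
  have hGpi : LipschitzWith Lm (fun p => (fun i => gc i p : Fin n → ℝ)) := by
    refine LipschitzWith.of_dist_le_mul fun p q => ?_
    rcases isEmpty_or_nonempty (Fin n) with h | h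
    · simp [dist_pi_def]
      positivity
    · rw [dist_pi_le_iff (by positivity)]
      intro i
      calc dist (gc i p) (gc i q) ≤ (L i : ℝ) * dist p q := (hgclip i).dist_le_mul p q
      _ ≤ (Lm : ℝ) * dist p q := by
          gcongr
          exact_mod_cast NNReal.coe_le_coe.2 (Finset.le_sup (Finset.mem_univ i))
  have hGlip : LipschitzWith (‖(e.symm : (Fin n → ℝ) →L[ℝ] EuclideanSpace ℝ (Fin n))‖₊ * Lm) G :=
    ((e.symm : (Fin n → ℝ) →L[ℝ] EuclideanSpace ℝ (Fin n)).lipschitz).comp hGpi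
  refine ⟨_, G, hGlip, fun p => ?_, fun p hp => ?_⟩
  · exact euclid_norm_le_of_coords (by linarith) _ (fun i => hgc_bdd i p)
  · refine euclid_norm_le_of_coords hδ.le _ (fun i => ?_)
    have : (G p - F p) i = gc i p - F p i := by
      simp [hGcoord]
    rw [this, hgc_eq i p hp]
    exact hgapprox i p hp

set_option maxHeartbeats 1000000 in
set_option synthInstance.maxHeartbeats 400000 in
/-- **Peano existence theorem.** For any continuous `F : ℝ × ℝⁿ → ℝⁿ` and any initial
condition `(t₀, x₀)`, there exist `ε > 0` and a continuously differentiable local solution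
`x` on `(t₀ - ε, t₀ + ε)` of the ODE `x' = F(t, x)` with `x t₀ = x₀`.  No Lipschitz
hypothesis on `F` is required. -/
theorem peano_existence (n : ℕ) (hn : 1 ≤ n)
    (F : ℝ × EuclideanSpace ℝ (Fin n) → EuclideanSpace ℝ (Fin n)) (hF : Continuous F)
    (t₀ : ℝ) (x₀ : EuclideanSpace ℝ (Fin n)) :
    ∃ ε > (0 : ℝ), ∃ x : ℝ → EuclideanSpace ℝ (Fin n),
      ContDiffOn ℝ 1 x (Ioo (t₀ - ε) (t₀ + ε)) ∧
      x t₀ = x₀ ∧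
      ∀ t ∈ Ioo (t₀ - ε) (t₀ + ε), HasDerivAt x (F (t, x t)) t := by
  classical
  set K : Set (ℝ × EuclideanSpace ℝ (Fin n)) := closedBall t₀ 1 ×ˢ closedBall x₀ 1 with hKdef
  have hKc : IsCompact K := (isCompact_closedBall t₀ 1).prod (isCompact_closedBall x₀ 1)
  have hKne : K.Nonempty :=
    ⟨(t₀, x₀), mem_prod.2 ⟨mem_closedBall_self zero_le_one, mem_closedBall_self zero_le_one⟩⟩
  obtain ⟨C, hC0, hC⟩ : ∃ C : ℝ, 0 ≤ C ∧ ∀ p ∈ K, ‖F p‖ ≤ C := by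
    obtain ⟨p, hp, hmax⟩ := hKc.exists_isMaxOn hKne hF.norm.continuousOn
    exact ⟨‖F p‖, norm_nonneg _, fun q hq => hmax hq⟩
  set M : ℝ := Real.sqrt n * (C + 2) with hM
  have hM0 : 0 < M := by
    have hn' : (1:ℝ) ≤ n := by exact_mod_cast hn
    have h1 : (0:ℝ) < Real.sqrt n := Real.sqrt_pos.2 (by linarith)
    rw [hM]
    positivity
  set ε : ℝ := min 1 (1 / M) with hε
  have hε0 : 0 < ε := lt_min one_pos (by positivity)
  have hε1 : ε ≤ 1 := min_le_left _ _
  have hεM : M * ε ≤ 1 := by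
    calc M * ε ≤ M * (1 / M) := by gcongr; exact min_le_right _ _
    _ = 1 := by field_simp
  set a : ℝ := t₀ - ε with ha
  set b : ℝ := t₀ + ε with hb
  have ha' : a = t₀ - ε := rfl
  have hb' : b = t₀ + ε := rfl
  have hab : a ≤ b := by rw [ha', hb']; linarith
  have ht₀J : t₀ ∈ Icc a b := ⟨by rw [ha']; linarith, by rw [hb']; linarith⟩
  -- time interval sits in the closed unit ball around t₀
  have htimeK : ∀ s ∈ Icc a b, s ∈ closedBall t₀ 1 := by
    intro s hs
    rw [mem_closedBall, Real.dist_eq, abs_le]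
    have h1 := hs.1; have h2 := hs.2
    constructor <;> linarith [ha'.le, ha'.ge, hb'.le, hb'.ge]
  -- Step 1: approximate Lipschitz problems and their solutions
  have key : ∀ k : ℕ, ∃ (G : ℝ × EuclideanSpace ℝ (Fin n) → EuclideanSpace ℝ (Fin n))
      (f : ℝ → EuclideanSpace ℝ (Fin n)),
      Continuous G ∧ (∀ p, ‖G p‖ ≤ M) ∧
      (∀ p ∈ K, ‖G p - F p‖ ≤ Real.sqrt n * (1 / (k + 1))) ∧
      f t₀ = x₀ ∧ ∀ t ∈ Icc a b, HasDerivWithinAt f (G (t, f t)) (Icc a b) t := by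
    intro k
    have hδ : (0:ℝ) < 1 / (k + 1) := by positivity
    have hδ1 : (1:ℝ) / (k + 1) ≤ 1 := by
      rw [div_le_one (by positivity)]; linarith [Nat.cast_nonneg (α := ℝ) k]
    obtain ⟨L, G, hGlip, hGbdd, hGapprox⟩ := vec_lipschitz_approx hKc hKne hF hC hδ hδ1
    have hpl : IsPicardLindelof (fun t x => G (t, x)) (⟨t₀, ht₀J⟩ : Icc a b) x₀ 1 0 ⟨M, hM0.le⟩ L := by
      refine ⟨?_, ?_, ?_, ?_⟩
      · intro t _
        have h1 : LipschitzWith (L * 1) (fun x => G (t, x)) :=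
          hGlip.comp (LipschitzWith.prodMk_left t)
        rw [mul_one] at h1
        exact h1.lipschitzOnWith
      · intro x _
        exact (hGlip.continuous.comp (continuous_id.prodMk continuous_const)).continuousOn
      · intro t _ x _
        exact hGbdd _
      · have h1 : b - t₀ = ε := by rw [hb']; ring
        have h2 : t₀ - a = ε := by rw [ha']; ring
        show M * max (b - t₀) (t₀ - a) ≤ (1:ℝ) - 0
        rw [sub_zero, h1, h2, max_self]
        exact hεM
    obtain ⟨f, hf₀, hfd⟩ := hpl.exists_eq_forall_mem_Icc_hasDerivWithinAt₀
    exact ⟨G, f, hGlip.continuous, hGbdd, hGapprox, hf₀, hfd⟩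
  choose G f hGcont hGbdd hGapprox hf₀ hfd using key
  -- Step 2: uniform bounds on the approximate solutions
  have hmod : ∀ k, ∀ s ∈ Icc a b, ∀ t ∈ Icc a b, ‖f k t - f k s‖ ≤ M * ‖t - s‖ := by
    intro k s hs t ht
    exact Convex.norm_image_sub_le_of_norm_hasDerivWithin_le (hfd k)
      (fun u _ => hGbdd k _) (convex_Icc a b) hs ht
  have hmem : ∀ k, ∀ t ∈ Icc a b, f k t ∈ closedBall x₀ 1 := by
    intro k t ht
    rw [mem_closedBall, dist_eq_norm]
    calc ‖f k t - x₀‖ = ‖f k t - f k t₀‖ := by rw [hf₀ k]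
    _ ≤ M * ‖t - t₀‖ := hmod k t₀ ht₀J t ht
    _ ≤ M * ε := by
        gcongr
        rw [Real.norm_eq_abs, abs_le]
        have h1 := ht.1; have h2 := ht.2
        constructor <;> linarith [ha'.le, ha'.ge, hb'.le, hb'.ge]
    _ ≤ 1 := hεM
  have hcont : ∀ k, ContinuousOn (f k) (Icc a b) :=
    fun k t ht => (hfd k t ht).continuousWithinAt
  have hKmem : ∀ k, ∀ s ∈ Icc a b, (s, f k s) ∈ K := fun k s hs =>
    mem_prod.2 ⟨htimeK s hs, hmem k s hs⟩
  -- Step 3: Arzelà-Ascoli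
  haveI : CompactSpace (Icc a b) := isCompact_iff_compactSpace.mp isCompact_Icc
  set u : ℕ → (Icc a b →ᵇ EuclideanSpace ℝ (Fin n)) := fun k =>
    BoundedContinuousFunction.mkOfCompact ⟨(Icc a b).restrict (f k), (hcont k).restrict⟩ with hu
  have huapp : ∀ k (z : Icc a b), u k z = f k z := fun k z => rfl
  set A : Set (Icc a b →ᵇ EuclideanSpace ℝ (Fin n)) := Set.range u with hA
  have hequi : Equicontinuous ((↑) : A → Icc a b → EuclideanSpace ℝ (Fin n)) := by
    intro z₀
    rw [Metric.equicontinuousAt_iff]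
    intro ρ hρ
    refine ⟨ρ / (M + 1), by positivity, fun z hz i => ?_⟩
    obtain ⟨g, ⟨k, rfl⟩⟩ := i
    show dist (u k z₀) (u k z) < ρ
    have hle : dist (u k z₀) (u k z) ≤ M * dist z z₀ := by
      calc dist (u k z₀) (u k z) = ‖f k z₀ - f k z‖ := by rw [huapp, huapp, dist_eq_norm]
      _ ≤ M * ‖(z₀ : ℝ) - (z : ℝ)‖ := hmod k z z.2 z₀ z₀.2
      _ = M * dist z z₀ := by
          rw [Subtype.dist_eq, Real.dist_eq, Real.norm_eq_abs, abs_sub_comm]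
    have hlt : M * dist z z₀ < ρ := by
      calc M * dist z z₀ ≤ M * (ρ / (M + 1)) := mul_le_mul_of_nonneg_left hz.le hM0.le
      _ < ρ := by
          rw [mul_div_assoc']
          rw [div_lt_iff₀ (by positivity)]
          nlinarith
    linarith
  have hAcomp : IsCompact (closure A) := by
    refine BoundedContinuousFunction.arzela_ascoli (closedBall x₀ 1)
      (isCompact_closedBall _ _) A ?_ hequi
    rintro g z ⟨k, rfl⟩
    rw [huapp]
    exact hmem k z z.2
  obtain ⟨w, _, φ, hφmono, hconv⟩ :=
    hAcomp.tendsto_subseq (fun k => subset_closure (mem_range_self k))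
  have hdist0 : Filter.Tendsto (fun j => dist (u (φ j)) w) Filter.atTop (nhds 0) :=
    tendsto_iff_dist_tendsto_zero.1 hconv
  have hptwise : ∀ z : Icc a b, Filter.Tendsto (fun j => u (φ j) z) Filter.atTop (nhds (w z)) := by
    intro z
    refine tendsto_iff_dist_tendsto_zero.2 (squeeze_zero (fun _ => dist_nonneg) ?_ hdist0)
    exact fun j => BoundedContinuousFunction.dist_coe_le_dist z
  -- the limit function, extended to ℝ
  set fc : ℝ → EuclideanSpace ℝ (Fin n) := fun t => w (projIcc a b hab t) with hfc
  have hfccont : Continuous fc := w.continuous.comp continuous_projIcc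
  have hfceq : ∀ t (ht : t ∈ Icc a b), fc t = w ⟨t, ht⟩ := by
    intro t ht
    simp [hfc, projIcc_of_mem hab ht]
  have hfcmem : ∀ t, fc t ∈ closedBall x₀ 1 := by
    intro t
    refine (isClosed_closedBall (x := x₀) (ε := 1)).mem_of_tendsto (hptwise (projIcc a b hab t))
      (Filter.Eventually.of_forall fun j => ?_)
    exact hmem _ _ (projIcc a b hab t).2
  have hKfc : ∀ s ∈ Icc a b, (s, fc s) ∈ K := fun s hs =>
    mem_prod.2 ⟨htimeK s hs, hfcmem s⟩
  -- the candidate solution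
  set g : ℝ → EuclideanSpace ℝ (Fin n) := fun s => F (s, fc s) with hg
  have hgcont : Continuous g := hF.comp (continuous_id.prodMk hfccont)
  set x : ℝ → EuclideanSpace ℝ (Fin n) := fun t => x₀ + ∫ s in t₀..t, g s with hx
  have hxderiv : ∀ t : ℝ, HasDerivAt x (g t) t := by
    intro t
    exact ((hgcont.integral_hasStrictDerivAt t₀ t).hasDerivAt).const_add x₀
  -- key identity : fc = x on Ioo a b
  have hkey : ∀ t ∈ Ioo a b, fc t = x t := by
    intro t ht
    have htIcc : t ∈ Icc a b := Ioo_subset_Icc_self ht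
    have hsub : uIcc t₀ t ⊆ Ioo a b := by
      have h1 : t₀ ∈ Ioo a b := ⟨by rw [ha']; linarith, by rw [hb']; linarith⟩
      exact (ordConnected_Ioo).uIcc_subset h1 ht
    have hsub' : uIcc t₀ t ⊆ Icc a b := hsub.trans Ioo_subset_Icc_self
    -- FTC for each approximate solution
    have hFTC : ∀ k, f k t = x₀ + ∫ s in t₀..t, G k (s, f k s) := by
      intro k
      have hint : IntervalIntegrable (fun s => G k (s, f k s)) MeasureTheory.volume t₀ t := by
        apply ContinuousOn.intervalIntegrable
        exact (hGcont k).comp_continuousOn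
          (continuousOn_id.prodMk ((hcont k).mono hsub'))
      have := intervalIntegral.integral_eq_sub_of_hasDerivAt
        (f := f k) (f' := fun s => G k (s, f k s)) (a := t₀) (b := t)
        (fun s hs => ((hfd k s (hsub' hs)).hasDerivAt (Icc_mem_nhds (hsub hs).1 (hsub hs).2)))
        hint
      rw [this, hf₀ k]
      abel
    -- pass to the limit
    have hlim1 : Filter.Tendsto (fun j => f (φ j) t) Filter.atTop (nhds (fc t)) := by
      have := hptwise ⟨t, htIcc⟩
      simp only [huapp] at this
      rw [hfceq t htIcc]
      exact this
    have hlim2 : Filter.Tendsto (fun j => f (φ j) t) Filter.atTop (nhds (x t)) := by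
      rw [Metric.tendsto_atTop]
      intro ρ hρ
      -- uniform continuity of F on K
      have huc := (hKc.uniformContinuousOn_of_continuous hF.continuousOn)
      rw [Metric.uniformContinuousOn_iff] at huc
      obtain ⟨δ, hδ0, hδ⟩ := huc (ρ / 4) (by positivity)
      -- eventually the two error terms are small
      have hev1 : ∀ᶠ j in Filter.atTop, Real.sqrt n * (1 / ((φ j : ℝ) + 1)) < ρ / 4 := by
        have h0 : Filter.Tendsto (fun j : ℕ => 1 / ((φ j : ℝ) + 1)) Filter.atTop (nhds 0) :=
          tendsto_one_div_add_atTop_nhds_zero_nat.comp hφmono.tendsto_atTop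
        have h1 := h0.const_mul (Real.sqrt n)
        rw [mul_zero] at h1
        exact h1.eventually_lt_const (by positivity)
      obtain ⟨N₂, hN₂⟩ := Metric.tendsto_atTop.1 hconv δ hδ0
      rw [Filter.eventually_atTop] at hev1
      obtain ⟨N₁, hN₁⟩ := hev1
      refine ⟨max N₁ N₂, fun j hj => ?_⟩
      have hj1 := hN₁ j (le_trans (le_max_left _ _) hj)
      have hj2 := hN₂ j (le_trans (le_max_right _ _) hj)
      -- pointwise bound on the integrand difference
      have hptbd : ∀ s ∈ uIcc t₀ t, ‖G (φ j) (s, f (φ j) s) - g s‖ ≤ ρ / 2 := by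
        intro s hs
        have hsIcc : s ∈ Icc a b := hsub' hs
        have h1 : ‖G (φ j) (s, f (φ j) s) - F (s, f (φ j) s)‖ ≤ Real.sqrt n * (1 / (φ j + 1)) :=
          hGapprox (φ j) _ (hKmem (φ j) s hsIcc)
        have h2 : ‖F (s, f (φ j) s) - g s‖ ≤ ρ / 4 := by
          have hd : dist ((s, f (φ j) s) : ℝ × EuclideanSpace ℝ (Fin n)) (s, fc s) < δ := by
            rw [Prod.dist_eq]
            simp only [dist_self]
            have : dist (f (φ j) s) (fc s) ≤ dist (u (φ j)) w := by
              have := BoundedContinuousFunction.dist_coe_le_dist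
                (f := u (φ j)) (g := w) (⟨s, hsIcc⟩ : Icc a b)
              rw [huapp] at this
              rw [hfceq s hsIcc]
              exact this
            calc max (0:ℝ) (dist (f (φ j) s) (fc s)) = dist (f (φ j) s) (fc s) :=
                  max_eq_right dist_nonneg
            _ ≤ dist (u (φ j)) w := this
            _ < δ := hj2
          have := hδ _ (hKmem (φ j) s hsIcc) _ (hKfc s hsIcc) hd
          rw [dist_eq_norm] at this
          exact this.le
        calc ‖G (φ j) (s, f (φ j) s) - g s‖
            ≤ ‖G (φ j) (s, f (φ j) s) - F (s, f (φ j) s)‖ + ‖F (s, f (φ j) s) - g s‖ := by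
              have : G (φ j) (s, f (φ j) s) - g s =
                (G (φ j) (s, f (φ j) s) - F (s, f (φ j) s)) + (F (s, f (φ j) s) - g s) := by abel
              rw [this]; exact norm_add_le _ _
        _ ≤ Real.sqrt n * (1 / (φ j + 1)) + ρ / 4 := add_le_add h1 h2
        _ ≤ ρ / 4 + ρ / 4 := by linarith
        _ = ρ / 2 := by ring
      -- integral bound
      have hint1 : IntervalIntegrable (fun s => G (φ j) (s, f (φ j) s)) MeasureTheory.volume t₀ t := by
        apply ContinuousOn.intervalIntegrable
        exact (hGcont (φ j)).comp_continuousOn (continuousOn_id.prodMk ((hcont (φ j)).mono hsub'))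
      have hint2 : IntervalIntegrable g MeasureTheory.volume t₀ t := hgcont.intervalIntegrable _ _
      have hibd : ‖(∫ s in t₀..t, G (φ j) (s, f (φ j) s)) - ∫ s in t₀..t, g s‖ ≤ ρ / 2 * |t - t₀| := by
        rw [← intervalIntegral.integral_sub hint1 hint2]
        exact intervalIntegral.norm_integral_le_of_norm_le_const
          (fun s hs => hptbd s (uIoc_subset_uIcc hs))
      have htt₀ : |t - t₀| ≤ 1 := by
        have h1 := ht.1; have h2 := ht.2
        rw [abs_le]
        constructor <;> linarith [ha'.le, ha'.ge, hb'.le, hb'.ge]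
      rw [hFTC (φ j), hx]
      rw [dist_add_left]
      calc dist (∫ s in t₀..t, G (φ j) (s, f (φ j) s)) (∫ s in t₀..t, g s)
          = ‖(∫ s in t₀..t, G (φ j) (s, f (φ j) s)) - ∫ s in t₀..t, g s‖ := dist_eq_norm _ _
      _ ≤ ρ / 2 * |t - t₀| := hibd
      _ ≤ ρ / 2 * 1 := by gcongr
      _ < ρ := by linarith
    exact tendsto_nhds_unique hlim1 hlim2
  -- conclusion
  refine ⟨ε, hε0, x, ?_, ?_, ?_⟩
  · have hdiff : Differentiable ℝ x := fun t => (hxderiv t).differentiableAt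
    have hderiv_eq : deriv x = g := funext fun t => (hxderiv t).deriv
    exact (contDiff_one_iff_deriv.2 ⟨hdiff, hderiv_eq ▸ hgcont⟩).contDiffOn
  · simp [hx]
  · intro t ht
    have h1 := hxderiv t
    have h2 : g t = F (t, x t) := by
      rw [hg]
      
      rw [← hkey t ht]
    rwa [h2] at h1
end
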